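/- For each n ≥ 2, with the common strategy fₘ(x₁,…,x_{n-1}) = m·x₁⋯x_{n-1}, the winning probability pₘ = ∫_{[0,1]^n} ε(m x₁⋯xₙ) dΛ^n converges to 1/2 as m → ∞. -/

import Mathlib

open MeasureTheory Filter

/-- `ε(t) = ⌊t⌋ - 2⌊t/2⌋`, the parity of `⌊t⌋`. -/
noncomputable def eps (t : ℝ) : ℝ := (⌊t⌋ : ℝ) - 2 * (⌊t / 2⌋ : ℝ)

lemma eps_nonneg (t : ℝ) : 0 ≤ eps t := by
  have h1 : ((2 * ⌊t / 2⌋ : ℤ) : ℝ) ≤ t := by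
    push_cast
    have := Int.floor_le (t / 2)
    linarith
  have h2 : (2 * ⌊t / 2⌋ : ℤ) ≤ ⌊t⌋ := Int.le_floor.2 h1
  have h3 : ((2 * ⌊t / 2⌋ : ℤ) : ℝ) ≤ ((⌊t⌋ : ℤ) : ℝ) := by exact_mod_cast h2
  unfold eps
  push_cast at h3 ⊢
  linarith

lemma eps_le_one (t : ℝ) : eps t ≤ 1 := by
  have h1 : t < 2 * ((⌊t / 2⌋ : ℝ) + 1) := by
    have := Int.lt_floor_add_one (t / 2)
    linarith
  have h2 : (⌊t⌋ : ℝ) ≤ t := Int.floor_le t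
  unfold eps
  have h3 : (⌊t⌋ : ℝ) < 2 * (⌊t / 2⌋ : ℝ) + 2 := by linarith
  have h4 : (⌊t⌋ : ℤ) < 2 * ⌊t / 2⌋ + 2 := by exact_mod_cast h3
  have h5 : (⌊t⌋ : ℤ) ≤ 2 * ⌊t / 2⌋ + 1 := by omega
  have h6 : (⌊t⌋ : ℝ) ≤ 2 * (⌊t / 2⌋ : ℝ) + 1 := by exact_mod_cast h5
  linarith

lemma abs_eps_le_one (t : ℝ) : |eps t| ≤ 1 := by
  rw [abs_of_nonneg (eps_nonneg t)]; exact eps_le_one t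

lemma eps_periodic : Function.Periodic eps 2 := by
  intro t
  unfold eps
  have h1 : ⌊t + 2⌋ = ⌊t⌋ + 2 := by exact_mod_cast Int.floor_add_intCast t 2
  have h2 : ⌊(t + 2) / 2⌋ = ⌊t / 2⌋ + 1 := by
    rw [show (t + 2) / 2 = t / 2 + 1 by ring]
    exact_mod_cast Int.floor_add_intCast (t / 2) 1
  rw [h1, h2]
  push_cast
  ring

lemma measurable_eps : Measurable eps := by
  unfold eps
  have h : Measurable fun t : ℝ => ((⌊t⌋ : ℤ) : ℝ) :=
    measurable_from_top.comp Int.measurable_floor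
  have h2 : Measurable fun t : ℝ => ((⌊t / 2⌋ : ℤ) : ℝ) :=
    (measurable_from_top.comp Int.measurable_floor).comp (measurable_id.div_const 2)
  exact h.sub (h2.const_mul 2)

lemma eps_integrableOn (s : Set ℝ) (hs : volume s ≠ ⊤) : IntegrableOn eps s := by
  refine Integrable.mono' ((integrableOn_const_iff (C := (1 : ℝ))).2 (Or.inr hs.lt_top))
    measurable_eps.aestronglyMeasurable ?_
  filter_upwards with t
  rw [Real.norm_eq_abs]
  exact abs_eps_le_one t

lemma eps_intervalIntegrable (a b : ℝ) : IntervalIntegrable eps volume a b :=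
  ⟨eps_integrableOn _ (by simp), eps_integrableOn _ (by simp)⟩

lemma eps_eq_zero_of_mem {t : ℝ} (ht : t ∈ Set.Ico (0 : ℝ) 1) : eps t = 0 := by
  have h1 : ⌊t⌋ = 0 := Int.floor_eq_zero_iff.2 ht
  have h2 : ⌊t / 2⌋ = 0 := Int.floor_eq_zero_iff.2 ⟨by linarith [ht.1], by
    have := ht.2; linarith⟩
  simp [eps, h1, h2]

lemma eps_eq_one_of_mem {t : ℝ} (ht : t ∈ Set.Ico (1 : ℝ) 2) : eps t = 1 := by
  have h1 : ⌊t⌋ = 1 := by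
    rw [Int.floor_eq_iff]
    exact ⟨by exact_mod_cast ht.1, by push_cast; linarith [ht.2]⟩
  have h2 : ⌊t / 2⌋ = 0 := Int.floor_eq_zero_iff.2 ⟨by linarith [ht.1], by
    have := ht.2; linarith⟩
  simp [eps, h1, h2]

lemma eps_integral_two : (∫ t in (0 : ℝ)..2, eps t) = 1 := by
  have h01 : (∫ t in (0 : ℝ)..1, eps t) = 0 := by
    rw [intervalIntegral.integral_of_le zero_le_one,
      MeasureTheory.setIntegral_congr_set Ico_ae_eq_Ioc.symm,
      MeasureTheory.setIntegral_congr_fun measurableSet_Ico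
        (fun t ht => eps_eq_zero_of_mem ht)]
    simp
  have h12 : (∫ t in (1 : ℝ)..2, eps t) = 1 := by
    rw [intervalIntegral.integral_of_le one_le_two,
      MeasureTheory.setIntegral_congr_set Ico_ae_eq_Ioc.symm,
      MeasureTheory.setIntegral_congr_fun measurableSet_Ico
        (fun t ht => eps_eq_one_of_mem ht)]
    simp [Real.volume_Ico]
    norm_num
  have := intervalIntegral.integral_add_adjacent_intervals
    (eps_intervalIntegrable 0 1) (eps_intervalIntegrable 1 2)
  rw [← this, h01, h12]
  norm_num

lemma eps_integral_bound (c : ℝ) (hc : 1 ≤ c) :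
    |(∫ t in Set.Icc (0 : ℝ) 1, eps (c * t)) - 1 / 2| ≤ 3 / c := by
  have hc0 : (0 : ℝ) < c := lt_of_lt_of_le one_pos hc
  set k : ℤ := ⌊c / 2⌋ with hk
  have hk1 : (k : ℝ) ≤ c / 2 := Int.floor_le _
  have hk2 : c / 2 < (k : ℝ) + 1 := Int.lt_floor_add_one _
  have h1 : (∫ t in Set.Icc (0 : ℝ) 1, eps (c * t)) = c⁻¹ * ∫ u in (0 : ℝ)..c, eps u := by
    rw [MeasureTheory.integral_Icc_eq_integral_Ioc,
      ← intervalIntegral.integral_of_le zero_le_one,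
      intervalIntegral.integral_comp_mul_left eps (ne_of_gt hc0)]
    norm_num
  have hsplit : (∫ u in (0 : ℝ)..c, eps u)
      = (∫ u in (0 : ℝ)..(2 * (k : ℝ)), eps u) + ∫ u in (2 * (k : ℝ))..c, eps u :=
    (intervalIntegral.integral_add_adjacent_intervals
      (eps_intervalIntegrable _ _) (eps_intervalIntegrable _ _)).symm
  have hper : (∫ u in (0 : ℝ)..(2 * (k : ℝ)), eps u) = (k : ℝ) := by
    have h := eps_periodic.intervalIntegral_add_zsmul_eq k 0 eps_intervalIntegrable
    simp only [zero_add] at h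
    rw [eps_integral_two] at h
    rw [show (2 : ℝ) * (k : ℝ) = k • (2 : ℝ) by rw [zsmul_eq_mul]; ring, h,
      zsmul_eq_mul, mul_one]
  have h2k : 2 * (k : ℝ) ≤ c := by linarith
  set r : ℝ := ∫ u in (2 * (k : ℝ))..c, eps u with hr
  have hr0 : 0 ≤ r := intervalIntegral.integral_nonneg h2k (fun u _ => eps_nonneg u)
  have hr2 : r ≤ 2 := by
    have hmono := intervalIntegral.integral_mono_on h2k (eps_intervalIntegrable _ _)
      (intervalIntegrable_const (c := (1 : ℝ))) (fun u _ => eps_le_one u)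
    have : (∫ _ in (2 * (k : ℝ))..c, (1 : ℝ)) = c - 2 * (k : ℝ) := by simp
    rw [this] at hmono
    linarith
  rw [h1, hsplit, hper]
  have heq : c⁻¹ * ((k : ℝ) + r) - 1 / 2 = ((k : ℝ) + r - c / 2) / c := by
    have hcc : c / 2 / c = 1 / 2 := by
      field_simp
    rw [sub_div, hcc, div_eq_inv_mul (((k : ℝ) + r)) c]
  rw [heq, abs_div, abs_of_pos hc0]
  have hnum : |(k : ℝ) + r - c / 2| ≤ 3 := by
    rw [abs_le]
    constructor <;> linarith
  gcongr

lemma tendsto_eps_integral :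
    Tendsto (fun c : ℝ => ∫ t in Set.Icc (0 : ℝ) 1, eps (c * t)) atTop (nhds (1 / 2)) := by
  rw [tendsto_iff_dist_tendsto_zero]
  refine squeeze_zero' (g := fun c : ℝ => 3 / c)
    (Eventually.of_forall fun c => dist_nonneg) ?_ ?_
  · filter_upwards [eventually_ge_atTop (1 : ℝ)] with c hc
    rw [Real.dist_eq]
    exact eps_integral_bound c hc
  · exact tendsto_const_nhds.div_atTop tendsto_id

lemma pi_restrict (k : ℕ) :
    (volume : Measure (Fin k → ℝ)).restrict (Set.univ.pi fun _ => Set.Icc (0 : ℝ) 1)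
      = Measure.pi (fun _ : Fin k => (volume : Measure ℝ).restrict (Set.Icc 0 1)) := by
  refine (Measure.pi_eq fun s hs => ?_).symm
  rw [Measure.restrict_apply (MeasurableSet.pi Set.countable_univ (fun i _ => hs i)),
    ← Set.pi_inter_distrib, volume_pi_pi]
  exact Finset.prod_congr rfl fun i _ => (Measure.restrict_apply (hs i)).symm

/-- With the common strategy `fₘ(x₁,…,x_{n-1}) = m·x₁⋯x_{n-1}`, the winning probability
`pₘ = ∫_{[0,1]^n} ε(m x₁⋯xₙ) dΛⁿ` converges to `1/2` as `m → ∞`. -/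
theorem product_strategy_tendsto_half (n : ℕ) (hn : 2 ≤ n) :
    Tendsto (fun m : ℕ =>
        ∫ x in Set.univ.pi (fun _ : Fin n => Set.Icc (0 : ℝ) 1),
          eps ((m : ℝ) * ∏ i : Fin n, x i))
      atTop (nhds (1 / 2)) := by
  obtain ⟨k, rfl⟩ : ∃ k, n = k + 1 := ⟨n - 1, by omega⟩
  set ρ : Measure ℝ := (volume : Measure ℝ).restrict (Set.Icc 0 1) with hρ
  haveI : IsProbabilityMeasure ρ := ⟨by
    rw [hρ, Measure.restrict_apply_univ, Real.volume_Icc]; norm_num⟩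
  set π' : Measure (Fin k → ℝ) := Measure.pi fun _ => ρ with hπ'
  set e := MeasurableEquiv.piFinSuccAbove (fun _ : Fin (k + 1) => ℝ) 0 with he
  have hmp : MeasurePreserving e (Measure.pi fun _ : Fin (k + 1) => ρ) (ρ.prod π') :=
    measurePreserving_piFinSuccAbove (fun _ : Fin (k + 1) => ρ) 0
  have hprod : ∀ (t : ℝ) (y : Fin k → ℝ),
      (∏ i : Fin (k + 1), (e.symm (t, y)) i) = t * ∏ j, y j := by
    intro t y
    rw [Fin.prod_univ_succAbove (fun i => (e.symm (t, y)) i) 0]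
    simp [he, MeasurableEquiv.piFinSuccAbove]
  have hmeas : ∀ m : ℕ, Measurable fun z : ℝ × (Fin k → ℝ) =>
      eps ((m : ℝ) * (z.1 * ∏ j, z.2 j)) := by
    intro m
    apply measurable_eps.comp
    apply Measurable.const_mul
    exact (measurable_fst.mul
      (Finset.measurable_prod _ fun j _ => (measurable_pi_apply j).comp measurable_snd))
  have key : ∀ m : ℕ,
      (∫ x in Set.univ.pi (fun _ : Fin (k + 1) => Set.Icc (0 : ℝ) 1),
        eps ((m : ℝ) * ∏ i : Fin (k + 1), x i))
      = ∫ y, (∫ t, eps ((m : ℝ) * (t * ∏ j, y j)) ∂ρ) ∂π' := by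
    intro m
    rw [pi_restrict (k + 1)]
    have h1 : (∫ x, eps ((m : ℝ) * ∏ i : Fin (k + 1), x i)
          ∂(Measure.pi fun _ : Fin (k + 1) => ρ))
        = ∫ z, eps ((m : ℝ) * ∏ i : Fin (k + 1), (e.symm z) i) ∂(ρ.prod π') :=
      ((hmp.symm e).integral_comp e.symm.measurableEmbedding _).symm
    rw [h1]
    have h2 : (fun z : ℝ × (Fin k → ℝ) => eps ((m : ℝ) * ∏ i : Fin (k + 1), (e.symm z) i))
        = fun z : ℝ × (Fin k → ℝ) => eps ((m : ℝ) * (z.1 * ∏ j, z.2 j)) := by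
      funext z
      rw [hprod z.1 z.2]
    rw [h2]
    have hint : Integrable (fun z : ℝ × (Fin k → ℝ) =>
        eps ((m : ℝ) * (z.1 * ∏ j, z.2 j))) (ρ.prod π') := by
      refine Integrable.mono' (integrable_const 1) (hmeas m).aestronglyMeasurable ?_
      filter_upwards with z
      rw [Real.norm_eq_abs]
      exact abs_eps_le_one _
    rw [MeasureTheory.integral_prod_symm _ hint]
  simp only [key]
  have hhalf : (1 : ℝ) / 2 = ∫ _, (1 / 2 : ℝ) ∂π' := by simp
  rw [hhalf]
  apply tendsto_integral_of_dominated_convergence (fun _ => (1 : ℝ))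
  · intro m
    exact ((hmeas m).stronglyMeasurable.integral_prod_left').aestronglyMeasurable
  · exact integrable_const 1
  · intro m
    filter_upwards with y
    calc ‖∫ t, eps ((m : ℝ) * (t * ∏ j, y j)) ∂ρ‖
        ≤ ∫ t, ‖eps ((m : ℝ) * (t * ∏ j, y j))‖ ∂ρ := norm_integral_le_integral_norm _
      _ ≤ ∫ _, (1 : ℝ) ∂ρ := by
          apply integral_mono_of_nonneg (Eventually.of_forall fun t => norm_nonneg _)
            (integrable_const 1)
          refine Eventually.of_forall fun t => ?_
          simpa [Real.norm_eq_abs] using abs_eps_le_one ((m : ℝ) * (t * ∏ j, y j))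
      _ = 1 := by simp
  · have hae : ∀ᵐ y ∂π', ∀ j, y j ∈ Set.Ioc (0 : ℝ) 1 := by
      rw [ae_all_iff]
      intro j
      rw [ae_iff]
      have hset : {y : Fin k → ℝ | ¬ y j ∈ Set.Ioc (0 : ℝ) 1}
          = Function.eval j ⁻¹' (Set.Ioc (0 : ℝ) 1)ᶜ := rfl
      rw [hset, hπ']
      apply Measure.pi_eval_preimage_null
      rw [hρ, Measure.restrict_apply (measurableSet_Ioc.compl)]
      have : (Set.Ioc (0 : ℝ) 1)ᶜ ∩ Set.Icc 0 1 = {0} := by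
        ext x
        simp only [Set.mem_inter_iff, Set.mem_compl_iff, Set.mem_Ioc, Set.mem_Icc,
          Set.mem_singleton_iff, not_and_or, not_lt, not_le]
        constructor
        · rintro ⟨h1 | h1, h2, h3⟩ <;> linarith
        · rintro rfl; exact ⟨Or.inl le_rfl, le_rfl, zero_le_one⟩
      rw [this]
      exact measure_singleton 0
    filter_upwards [hae] with y hy
    have hP : (0 : ℝ) < ∏ j, y j := Finset.prod_pos fun j _ => (hy j).1
    have hrw : ∀ (m : ℕ) (t : ℝ), (m : ℝ) * (t * ∏ j, y j) = ((m : ℝ) * ∏ j, y j) * t :=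
      fun m t => by ring
    simp only [hrw]
    have : Tendsto (fun m : ℕ => (m : ℝ) * ∏ j, y j) atTop atTop :=
      tendsto_natCast_atTop_atTop.atTop_mul_const hP
    exact (tendsto_eps_integral.comp this)
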